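/- Let n be an odd prime, let k, k' be integers with 1 ≤ k ≤ n−1 and 1 ≤ k' ≤ n−1, and let σ ∈ {1, −1}. If sin(πk/n) · sin(2πk'/n + π/4) = σ · sin(πk'/n) · sin(2πk/n + π/4), then k = k' and σ = 1. -/

import Mathlib

open Complex Polynomial

noncomputable def fpow (n : ℕ) (r : ZMod n) : ℂ :=
  Complex.exp (2 * Real.pi * Complex.I / n) ^ r.val

def dlt {n : ℕ} (x r : ZMod n) : ℚ := if r = x then 1 else 0

noncomputable def ee (n : ℕ) (m : ℤ) : ℂ := Complex.exp (Real.pi * m / n * Complex.I)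

lemma I_not_mem (n : ℕ) (hp : n.Prime) (hodd : Odd n) :
    Complex.I ∉ IntermediateField.adjoin ℚ {Complex.exp (2 * Real.pi * Complex.I / n)} := by
  intro hI
  have hn0 : n ≠ 0 := hp.ne_zero
  set η : ℂ := Complex.exp (2 * Real.pi * Complex.I / n) with hηdef
  have hη : IsPrimitiveRoot η n := Complex.isPrimitiveRoot_exp n hn0
  have hint : IsIntegral ℚ η := (hη.isIntegral hp.pos).tower_top
  set K := IntermediateField.adjoin ℚ {η} with hK
  haveI : FiniteDimensional ℚ K := IntermediateField.adjoin.finiteDimensional hint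
  have hrank : Module.finrank ℚ K = n.totient := by
    rw [hK, IntermediateField.adjoin.finrank hint,
      ← Polynomial.cyclotomic_eq_minpoly_rat hη hp.pos, Polynomial.natDegree_cyclotomic]
  -- ψ is a primitive 4n-th root of unity
  set ψ : ℂ := Complex.exp (2 * Real.pi * Complex.I / (4 * n)) with hψdef
  have h4n0 : (4 * n : ℕ) ≠ 0 := by positivity
  have hψ : IsPrimitiveRoot ψ (4 * n) := by
    have := Complex.isPrimitiveRoot_exp (4 * n) h4n0
    simpa [hψdef] using this
  -- ψ ∈ K
  have hψne : ψ ≠ 0 := Complex.exp_ne_zero _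
  have hψ4 : ψ ^ (4 : ℕ) = η := by
    rw [hψdef, hηdef, ← Complex.exp_nat_mul]
    congr 1
    have : (n : ℂ) ≠ 0 := Nat.cast_ne_zero.mpr hn0
    field_simp
    ring
  have hψn : ψ ^ (n : ℕ) = Complex.I := by
    rw [hψdef, ← Complex.exp_nat_mul]
    have : (n : ℂ) ≠ 0 := Nat.cast_ne_zero.mpr hn0
    have harg : (n : ℂ) * (2 * Real.pi * Complex.I / (4 * n)) = (Real.pi / 2) * Complex.I := by
      field_simp; ring
    rw [harg, Complex.exp_mul_I]
    push_cast
    rw [Complex.cos_pi_div_two, Complex.sin_pi_div_two]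
    ring
  obtain ⟨u, v, huv⟩ : ∃ u v : ℤ, u * 4 + v * n = 1 := by
    have hcop : IsCoprime (4 : ℤ) (n : ℤ) := by
      rw [Int.isCoprime_iff_gcd_eq_one]
      have : Nat.Coprime 4 n := by
        have h2 : Nat.Coprime 2 n := (Nat.coprime_primes Nat.prime_two hp).mpr
          (by rintro rfl; exact (Nat.not_odd_iff_even.mpr even_two) hodd)
        exact Nat.Coprime.pow_left 2 h2
      exact this
    obtain ⟨u, v, h⟩ := hcop
    exact ⟨u, v, h⟩
  have hψmem : ψ ∈ K := by
    have hηm : η ∈ K := IntermediateField.mem_adjoin_simple_self ℚ η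
    have e4 : ψ ^ (4 : ℤ) = η := by rw [show ((4:ℤ)) = ((4:ℕ):ℤ) by norm_num, zpow_natCast, hψ4]
    have en : ψ ^ ((n:ℕ) : ℤ) = Complex.I := by rw [zpow_natCast, hψn]
    have h1 : ψ = η ^ u * Complex.I ^ v := by
      have h0 : ψ = ψ ^ (u * 4 + v * n : ℤ) := by rw [huv]; simp
      rw [h0, zpow_add₀ hψne, mul_comm (u:ℤ) 4, mul_comm (v:ℤ) ((n:ℤ))]
      rw [zpow_mul, zpow_mul, e4, en]
    rw [h1]
    exact mul_mem (zpow_mem hηm u) (zpow_mem hI v)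
  -- degree contradiction
  have hbig : (4 * n).totient ≤ n.totient := by
    have := minpoly.natDegree_le (A := ℚ) (⟨ψ, hψmem⟩ : K)
    rwa [show minpoly ℚ (⟨ψ, hψmem⟩ : K) = minpoly ℚ ψ from
        (minpoly.algebraMap_eq (algebraMap K ℂ).injective _).symm,
      ← Polynomial.cyclotomic_eq_minpoly_rat hψ (by positivity),
      Polynomial.natDegree_cyclotomic, hrank] at this
  have h4 : (4 * n).totient = 2 * n.totient := by
    rw [Nat.totient_mul (by
      have h2 : Nat.Coprime 2 n := (Nat.coprime_primes Nat.prime_two hp).mpr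
        (by rintro rfl; exact (Nat.not_odd_iff_even.mpr even_two) hodd)
      exact Nat.Coprime.pow_left 2 h2), show Nat.totient 4 = 2 from by decide]
  have hpos : 0 < n.totient := Nat.totient_pos.mpr hp.pos
  omega

lemma ratRel (n : ℕ) [NeZero n] (hp : n.Prime) (a : ZMod n → ℚ)
    (H : ∑ r : ZMod n, (a r : ℂ) * Complex.exp (2 * Real.pi * Complex.I / n) ^ (r.val) = 0) :
    ∀ r, a r = a 0 := by
  haveI : Fact n.Prime := ⟨hp⟩
  set η : ℂ := Complex.exp (2 * Real.pi * Complex.I / n) with hηdef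
  set P : ℚ[X] := ∑ r : ZMod n, C (a r) * X ^ (r.val) with hP
  have hcoeff : ∀ j, j < n → P.coeff j = a (j : ZMod n) := by
    intro j hj
    rw [hP, Polynomial.finset_sum_coeff]
    rw [Finset.sum_eq_single ((j : ZMod n))]
    · simp [Polynomial.coeff_C_mul, Polynomial.coeff_X_pow, ZMod.val_cast_of_lt hj]
    · intro r _ hr
      simp only [Polynomial.coeff_C_mul, Polynomial.coeff_X_pow]
      rw [if_neg, mul_zero]
      intro hjr
      apply hr
      rw [hjr]
      simp [ZMod.natCast_val, ZMod.cast_id]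
    · intro h; exact absurd (Finset.mem_univ _) h
  have hev : Polynomial.aeval η P = 0 := by
    rw [hP]
    rw [map_sum]
    simpa using H
  have hdvd : Polynomial.cyclotomic n ℚ ∣ P := by
    rw [Polynomial.cyclotomic_eq_minpoly_rat (Complex.isPrimitiveRoot_exp n (NeZero.ne n)) hp.pos]
    exact minpoly.dvd ℚ η hev
  obtain ⟨Q, hQ⟩ := hdvd
  have hdegP : P.natDegree ≤ n - 1 := by
    rw [hP]
    refine (Polynomial.natDegree_sum_le _ _).trans ?_
    apply Finset.sup_le
    intro r _
    simp only [Function.comp]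
    refine (Polynomial.natDegree_C_mul_le _ _).trans ?_
    rw [Polynomial.natDegree_X_pow]
    exact Nat.le_sub_one_of_lt (ZMod.val_lt r)
  have hdegC : (Polynomial.cyclotomic n ℚ).natDegree = n - 1 := by
    rw [Polynomial.natDegree_cyclotomic, Nat.totient_prime hp]
  -- Q is a constant
  obtain ⟨q, hq⟩ : ∃ q : ℚ, ∀ j, j < n → P.coeff j = q := by
    by_cases hQ0 : Q = 0
    · refine ⟨0, fun j hj => ?_⟩
      rw [hQ, hQ0, mul_zero, Polynomial.coeff_zero]
    · have hC0 : Polynomial.cyclotomic n ℚ ≠ 0 := Polynomial.cyclotomic_ne_zero n ℚ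
      have hdeg : P.natDegree = (n-1) + Q.natDegree := by
        rw [hQ, Polynomial.natDegree_mul hC0 hQ0, hdegC]
      have hQdeg : Q.natDegree = 0 := by omega
      obtain ⟨q, rfl⟩ := Polynomial.natDegree_eq_zero.mp hQdeg
      refine ⟨q, fun j hj => ?_⟩
      rw [hQ, Polynomial.cyclotomic_prime ℚ n, mul_comm, Polynomial.coeff_C_mul,
        Polynomial.finset_sum_coeff]
      simp only [Polynomial.coeff_X_pow]
      rw [Finset.sum_ite_eq]
      simp [Finset.mem_range.mpr hj]
  intro r
  have h1 : a r = q := by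
    have := hcoeff r.val (ZMod.val_lt r)
    rw [hq _ (ZMod.val_lt r)] at this
    rw [this]
    congr 1
    simp [ZMod.natCast_val, ZMod.cast_id]
  have h0 : a 0 = q := by
    have := hcoeff 0 hp.pos
    rw [hq _ hp.pos] at this
    rw [this]
    norm_num
  rw [h1, h0]

lemma keyLemma (n : ℕ) [NeZero n] (hp : n.Prime) (hodd : Odd n) (a b : ZMod n → ℚ)
    (H : ∑ r : ZMod n, (a r : ℂ) * Complex.exp (2 * Real.pi * Complex.I / n) ^ (r.val)
       + Complex.I * ∑ r : ZMod n, (b r : ℂ) * Complex.exp (2 * Real.pi * Complex.I / n) ^ (r.val) = 0) :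
    (∀ r, a r = a 0) ∧ (∀ r, b r = b 0) := by
  set η : ℂ := Complex.exp (2 * Real.pi * Complex.I / n) with hηdef
  set K := IntermediateField.adjoin ℚ {η} with hK
  have hηm : η ∈ K := IntermediateField.mem_adjoin_simple_self ℚ η
  have hmem : ∀ c : ZMod n → ℚ, (∑ r : ZMod n, (c r : ℂ) * η ^ (r.val)) ∈ K := by
    intro c
    refine Subfield.sum_mem _ (fun r _ => ?_)
    refine mul_mem ?_ (pow_mem hηm _)
    have : ((c r : ℂ)) = algebraMap ℚ ℂ (c r) := by norm_num
    rw [this]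
    exact IntermediateField.algebraMap_mem K (c r)
  set A := ∑ r : ZMod n, (a r : ℂ) * η ^ (r.val) with hA
  set B := ∑ r : ZMod n, (b r : ℂ) * η ^ (r.val) with hB
  have hB0 : B = 0 := by
    by_contra hB0
    apply I_not_mem n hp hodd
    have : Complex.I = (-A) * B⁻¹ := by
      rw [eq_mul_inv_iff_mul_eq₀ hB0]
      linear_combination H
    rw [← hηdef, ← hK, this]
    exact mul_mem (neg_mem (hmem a)) (inv_mem (hmem b))
  have hA0 : A = 0 := by
    rw [hB0, mul_zero, add_zero] at H
    exact H
  exact ⟨ratRel n hp a hA0, ratRel n hp b hB0⟩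

lemma bridge (n : ℕ) [NeZero n] (hp : n.Prime) (hodd : Odd n)
    (X1 X2 X3 X4 Y1 Y2 Y3 Y4 : ZMod n) (ε : ℚ)
    (hMain : -(1 + Complex.I) * (fpow n X1 - fpow n X2) + (1 - Complex.I) * (fpow n X3 - fpow n X4)
      = (ε : ℂ) * (-(1 + Complex.I) * (fpow n Y1 - fpow n Y2)
        + (1 - Complex.I) * (fpow n Y3 - fpow n Y4))) :
    ∀ r : ZMod n, dlt X1 r - dlt X2 r = ε * (dlt Y1 r - dlt Y2 r) := by
  have key8 : ∀ (q1 q2 q3 q4 q5 q6 q7 q8 : ℚ) (Z1 Z2 Z3 Z4 Z5 Z6 Z7 Z8 : ZMod n),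
      ∑ r : ZMod n, ((q1 * dlt Z1 r + q2 * dlt Z2 r + q3 * dlt Z3 r + q4 * dlt Z4 r
        + q5 * dlt Z5 r + q6 * dlt Z6 r + q7 * dlt Z7 r + q8 * dlt Z8 r : ℚ) : ℂ) * fpow n r
      = q1 * fpow n Z1 + q2 * fpow n Z2 + q3 * fpow n Z3 + q4 * fpow n Z4
        + q5 * fpow n Z5 + q6 * fpow n Z6 + q7 * fpow n Z7 + q8 * fpow n Z8 := by
    intros q1 q2 q3 q4 q5 q6 q7 q8 Z1 Z2 Z3 Z4 Z5 Z6 Z7 Z8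
    have single : ∀ (q : ℚ) (Z : ZMod n),
        ∑ r : ZMod n, ((q * dlt Z r : ℚ) : ℂ) * fpow n r = q * fpow n Z := by
      intro q Z
      simp only [dlt, mul_ite, mul_one, mul_zero, apply_ite (fun x : ℚ => (x : ℂ)),
        Rat.cast_zero, ite_mul, zero_mul]
      rw [Finset.sum_ite_eq' Finset.univ Z (fun r => ((q:ℚ) : ℂ) * fpow n r)]
      simp
    push_cast
    simp only [add_mul]
    rw [Finset.sum_add_distrib, Finset.sum_add_distrib, Finset.sum_add_distrib,
      Finset.sum_add_distrib, Finset.sum_add_distrib, Finset.sum_add_distrib,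
      Finset.sum_add_distrib]
    have s1 := single q1 Z1; have s2 := single q2 Z2; have s3 := single q3 Z3
    have s4 := single q4 Z4; have s5 := single q5 Z5; have s6 := single q6 Z6
    have s7 := single q7 Z7; have s8 := single q8 Z8
    push_cast at s1 s2 s3 s4 s5 s6 s7 s8
    rw [s1, s2, s3, s4, s5, s6, s7, s8]
  set a : ZMod n → ℚ := fun r => (-1) * dlt X1 r + 1 * dlt X2 r + 1 * dlt X3 r + (-1) * dlt X4 r
    + ε * dlt Y1 r + (-ε) * dlt Y2 r + (-ε) * dlt Y3 r + ε * dlt Y4 r with hadef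
  set b : ZMod n → ℚ := fun r => (-1) * dlt X1 r + 1 * dlt X2 r + (-1) * dlt X3 r + 1 * dlt X4 r
    + ε * dlt Y1 r + (-ε) * dlt Y2 r + ε * dlt Y3 r + (-ε) * dlt Y4 r with hbdef
  have hsa : ∑ r : ZMod n, (a r : ℂ) * fpow n r
      = (-1 : ℚ) * fpow n X1 + (1:ℚ) * fpow n X2 + (1:ℚ) * fpow n X3 + (-1:ℚ) * fpow n X4
        + (ε:ℂ) * fpow n Y1 + (-(ε:ℂ)) * fpow n Y2 + (-(ε:ℂ)) * fpow n Y3 + (ε:ℂ) * fpow n Y4 := by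
    rw [hadef]
    rw [key8 (-1) 1 1 (-1) ε (-ε) (-ε) ε X1 X2 X3 X4 Y1 Y2 Y3 Y4]
    push_cast
    ring
  have hsb : ∑ r : ZMod n, (b r : ℂ) * fpow n r
      = (-1 : ℚ) * fpow n X1 + (1:ℚ) * fpow n X2 + (-1:ℚ) * fpow n X3 + (1:ℚ) * fpow n X4
        + (ε:ℂ) * fpow n Y1 + (-(ε:ℂ)) * fpow n Y2 + (ε:ℂ) * fpow n Y3 + (-(ε:ℂ)) * fpow n Y4 := by
    rw [hbdef]
    rw [key8 (-1) 1 (-1) 1 ε (-ε) ε (-ε) X1 X2 X3 X4 Y1 Y2 Y3 Y4]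
    push_cast
    ring
  have H : ∑ r : ZMod n, (a r : ℂ) * Complex.exp (2 * Real.pi * Complex.I / n) ^ (r.val)
       + Complex.I * ∑ r : ZMod n, (b r : ℂ) * Complex.exp (2 * Real.pi * Complex.I / n) ^ (r.val) = 0 := by
    have h1 : ∀ r : ZMod n, Complex.exp (2 * Real.pi * Complex.I / n) ^ (r.val) = fpow n r :=
      fun r => rfl
    simp only [h1]
    rw [hsa, hsb]
    push_cast
    linear_combination hMain
  obtain ⟨ha0, hb0⟩ := keyLemma n hp hodd a b H
  -- sums are zero
  have hdsum : ∀ X : ZMod n, ∑ r : ZMod n, dlt X r = 1 := by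
    intro X
    simp only [dlt]
    rw [Finset.sum_ite_eq' Finset.univ X (fun _ => (1:ℚ))]
    simp
  have hsuma : ∑ r : ZMod n, a r = 0 := by
    rw [hadef]
    rw [Finset.sum_add_distrib, Finset.sum_add_distrib, Finset.sum_add_distrib,
      Finset.sum_add_distrib, Finset.sum_add_distrib, Finset.sum_add_distrib,
      Finset.sum_add_distrib]
    simp only [← Finset.mul_sum, hdsum]
    ring
  have hsumb : ∑ r : ZMod n, b r = 0 := by
    rw [hbdef]
    rw [Finset.sum_add_distrib, Finset.sum_add_distrib, Finset.sum_add_distrib,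
      Finset.sum_add_distrib, Finset.sum_add_distrib, Finset.sum_add_distrib,
      Finset.sum_add_distrib]
    simp only [← Finset.mul_sum, hdsum]
    ring
  have hcard : (Finset.univ : Finset (ZMod n)).card = n := by
    simp [ZMod.card]
  have hn0 : (n : ℚ) ≠ 0 := Nat.cast_ne_zero.mpr (NeZero.ne n)
  have haz : ∀ r, a r = 0 := by
    intro r
    have : ∑ r : ZMod n, a r = n * a 0 := by
      rw [Finset.sum_congr rfl (fun r _ => ha0 r), Finset.sum_const, hcard, nsmul_eq_mul]
    rw [hsuma] at this
    have h0 : a 0 = 0 := by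
      rcases mul_eq_zero.mp this.symm with h | h
      · exact absurd h hn0
      · exact h
    rw [ha0 r, h0]
  have hbz : ∀ r, b r = 0 := by
    intro r
    have : ∑ r : ZMod n, b r = n * b 0 := by
      rw [Finset.sum_congr rfl (fun r _ => hb0 r), Finset.sum_const, hcard, nsmul_eq_mul]
    rw [hsumb] at this
    have h0 : b 0 = 0 := by
      rcases mul_eq_zero.mp this.symm with h | h
      · exact absurd h hn0
      · exact h
    rw [hb0 r, h0]
  intro r
  have h1 := haz r
  have h2 := hbz r
  rw [hadef] at h1
  rw [hbdef] at h2
  simp only at h1 h2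
  linarith

lemma ind_one {p q : Prop} [Decidable p] [Decidable q]
    (h : (1:ℚ) = (if p then 1 else 0) - (if q then 1 else 0)) : p := by
  by_cases hp : p <;> by_cases hq : q <;> simp [hp, hq] at h ⊢ <;> norm_num at h

lemma ind_neg_one {p q : Prop} [Decidable p] [Decidable q]
    (h : (-1:ℚ) = (if p then 1 else 0) - (if q then 1 else 0)) : q := by
  by_cases hp : p <;> by_cases hq : q <;> simp [hp, hq] at h ⊢ <;> norm_num at h

lemma deltas {n : ℕ} (x1 x2 y1 y2 : ZMod n) (hx : x1 ≠ x2) (ε : ℚ)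
    (hε : ε = 1 ∨ ε = -1)
    (h : ∀ r, dlt x1 r - dlt x2 r = ε * (dlt y1 r - dlt y2 r)) :
    (ε = 1 ∧ x1 = y1 ∧ x2 = y2) ∨ (ε = -1 ∧ x1 = y2 ∧ x2 = y1) := by
  have e1 := h x1
  have e2 := h x2
  simp only [dlt, eq_self_iff_true, if_true, if_pos rfl, if_neg (fun hh : x1 = x2 => hx hh),
    if_neg (fun hh : x2 = x1 => hx hh.symm)] at e1 e2
  rcases hε with rfl | rfl
  · left
    refine ⟨rfl, ind_one (p := x1 = y1) (q := x1 = y2) (by linarith [e1]),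
      ind_neg_one (p := x2 = y1) (q := x2 = y2) (by linarith [e2])⟩
  · right
    refine ⟨rfl, ind_one (p := x1 = y2) (q := x1 = y1) (by linarith [e1]),
      ind_neg_one (p := x2 = y2) (q := x2 = y1) (by linarith [e2])⟩

lemma hfz (n : ℕ) [NeZero n] (j : ℤ) :
    Complex.exp (2 * Real.pi * Complex.I / n) ^ j = fpow n ((j : ZMod n)) := by
  set η := Complex.exp (2 * Real.pi * Complex.I / n) with hη
  have hηne : η ≠ 0 := Complex.exp_ne_zero _
  have hηn : η ^ (n : ℕ) = 1 := by
    rw [hη, ← Complex.exp_nat_mul]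
    have hn0 : (n:ℂ) ≠ 0 := Nat.cast_ne_zero.mpr (NeZero.ne n)
    rw [show (n:ℂ) * (2 * Real.pi * Complex.I / n) = 2 * Real.pi * Complex.I by field_simp]
    simpa using Complex.exp_int_mul_two_pi_mul_I 1
  have hdvd : (n : ℤ) ∣ j - ((j : ZMod n).val : ℤ) := by
    rw [← ZMod.intCast_zmod_eq_zero_iff_dvd]
    push_cast
    simp [ZMod.natCast_val, ZMod.intCast_cast, ZMod.cast_id]
  obtain ⟨t, ht⟩ := hdvd
  have hj : j = ((j : ZMod n).val : ℤ) + n * t := by omega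
  calc η ^ j = η ^ (((j : ZMod n).val : ℤ) + (n : ℤ) * t) := by rw [← hj]
    _ = fpow n ((j : ZMod n)) := by
        rw [zpow_add₀ hηne, zpow_natCast, zpow_mul, zpow_natCast, hηn, one_zpow, mul_one]
        rfl

lemma eEq (n : ℕ) [NeZero n] (c : ℕ) (h2c : 2 * c = n + 1) (m : ℤ) :
    ee n m = (-1 : ℂ) ^ m * fpow n ((c : ZMod n) * (m : ZMod n)) := by
  rw [ee]
  have hn0 : (n:ℂ) ≠ 0 := Nat.cast_ne_zero.mpr (NeZero.ne n)
  have h1 : ((c * m : ℤ) : ZMod n) = (c : ZMod n) * (m : ZMod n) := by push_cast; ring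
  rw [← h1, ← hfz n (c * m : ℤ)]
  rw [show ((-1 : ℂ)) = Complex.exp (Real.pi * Complex.I) from Complex.exp_pi_mul_I.symm]
  rw [← Complex.exp_int_mul, ← Complex.exp_int_mul, ← Complex.exp_add]
  rw [show (m : ℂ) * (Real.pi * Complex.I) + (c * m : ℤ) * (2 * Real.pi * Complex.I / n)
      = Real.pi * m / n * Complex.I + m * (2 * Real.pi * Complex.I) by
    have h2cC : (2 : ℂ) * c = n + 1 := by exact_mod_cast congrArg (Nat.cast : ℕ → ℂ) h2c
    field_simp
    push_cast
    linear_combination (m : ℂ) * h2cC]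
  rw [Complex.exp_add, Complex.exp_int_mul_two_pi_mul_I, mul_one]

lemma e_mul (n : ℕ) (a b : ℤ) : ee n a * ee n b = ee n (a + b) := by
  rw [ee, ee, ee]
  rw [← Complex.exp_add]
  congr 1
  push_cast
  ring

lemma quad (x y z w : ℂ) :
    (y - x) * Complex.I / 2 * ((w - z) * Complex.I / 2 + (z + w) / 2)
      = (-(1 + Complex.I) * (x * z - y * z) + (1 - Complex.I) * (x * w - y * w)) / 4 := by
  linear_combination ((y - x) * (w - z) / 4) * Complex.I_sq

lemma sgn_even (a b : ℤ) : (-1 : ℂ) ^ (a + 2 * b) = (-1 : ℂ) ^ a := by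
  rw [zpow_add₀ (by norm_num : (-1:ℂ) ≠ 0), zpow_mul]
  norm_num

lemma sgn_self_mul (a : ℤ) : (-1 : ℂ) ^ a * (-1 : ℂ) ^ a = 1 := by
  rw [← zpow_add₀ (by norm_num : (-1:ℂ) ≠ 0), show a + a = 2 * a by ring, zpow_mul]
  norm_num

lemma sgn_even' (a b : ℤ) : (-1 : ℂ) ^ (-a + 2 * b) = (-1 : ℂ) ^ a := by
  rw [zpow_add₀ (by norm_num : (-1:ℂ) ≠ 0), zpow_mul]
  norm_num
  exact inv_eq_of_mul_eq_one_right (sgn_self_mul a)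

lemma sgn_neg (a b : ℤ) : (-1 : ℂ) ^ (a + -(2 * b)) = (-1 : ℂ) ^ a := by
  rw [show a + -(2*b) = a + 2 * (-b) by ring, sgn_even]

lemma sgn_neg' (a b : ℤ) : (-1 : ℂ) ^ (-a + -(2 * b)) = (-1 : ℂ) ^ a := by
  rw [show -a + -(2*b) = -a + 2 * (-b) by ring, sgn_even']

lemma sgn_parity (m : ℕ) : (-1 : ℂ) ^ (m : ℤ) = if Even m then 1 else -1 := by
  rcases Nat.even_or_odd m with ⟨t, rfl⟩ | ⟨t, rfl⟩
  · rw [if_pos ⟨t, rfl⟩]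
    rw [show ((t + t : ℕ) : ℤ) = 2 * (t : ℤ) by push_cast; ring, zpow_mul]
    norm_num
  · rw [if_neg (by simp [Nat.even_add_one])]
    rw [show ((2 * t + 1 : ℕ) : ℤ) = 2 * (t : ℤ) + 1 by push_cast; ring,
      zpow_add₀ (by norm_num : (-1:ℂ) ≠ 0), zpow_mul]
    norm_num

/-- For an odd prime `n`, integers `1 ≤ k, k' ≤ n−1` and a sign `σ = ±1`, the
identity `sin(πk/n)·sin(2πk'/n + π/4) = σ·sin(πk'/n)·sin(2πk/n + π/4)` forces `k = k'` and
`σ = 1`. -/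
theorem lissajous_stmt11 (n : ℕ) (hp : n.Prime) (hodd : Odd n) (k k' : ℕ)
    (hk1 : 1 ≤ k) (hk2 : k ≤ n - 1) (hk'1 : 1 ≤ k') (hk'2 : k' ≤ n - 1)
    (σ : ℝ) (hσ : σ = 1 ∨ σ = -1)
    (h : Real.sin (Real.pi * k / n) * Real.sin (2 * Real.pi * k' / n + Real.pi / 4) =
      σ * (Real.sin (Real.pi * k' / n) * Real.sin (2 * Real.pi * k / n + Real.pi / 4))) :
    k = k' ∧ σ = 1 := by
  haveI : NeZero n := ⟨hp.ne_zero⟩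
  haveI : Fact n.Prime := ⟨hp⟩
  haveI : Fact (1 < n) := ⟨hp.one_lt⟩
  have hn1 : 1 < n := hp.one_lt
  have hkn : k < n := by omega
  have hk'n : k' < n := by omega
  obtain ⟨c0, hc0⟩ := hodd
  have h2c : 2 * (c0 + 1) = n + 1 := by omega
  set c : ℕ := c0 + 1 with hc
  -- Step A : remove the π/4 shift
  rw [Real.sin_add, Real.sin_add, Real.sin_pi_div_four, Real.cos_pi_div_four] at h
  have hs2 : Real.sqrt 2 / 2 ≠ 0 := by positivity
  have E : Real.sin (Real.pi * k / n) * (Real.sin (2 * Real.pi * k' / n) + Real.cos (2 * Real.pi * k' / n))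
      = σ * (Real.sin (Real.pi * k' / n) * (Real.sin (2 * Real.pi * k / n) + Real.cos (2 * Real.pi * k / n))) := by
    apply mul_right_cancel₀ hs2
    linear_combination h
  have harg : ∀ m : ℕ, (2:ℝ) * Real.pi * m / n = Real.pi * ((2*m : ℕ):ℝ) / n := by
    intro m; push_cast; ring
  rw [harg k, harg k'] at E
  -- complexify
  have EC := congrArg (Complex.ofReal) E
  simp only [Complex.ofReal_mul, Complex.ofReal_add] at EC
  have hsinE : ∀ x : ℝ, (Real.sin x : ℂ)
      = (Complex.exp (-(x:ℂ) * Complex.I) - Complex.exp ((x:ℂ) * Complex.I)) * Complex.I / 2 := by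
    intro x; rw [Complex.ofReal_sin]; rfl
  have hcosE : ∀ x : ℝ, (Real.cos x : ℂ)
      = (Complex.exp ((x:ℂ) * Complex.I) + Complex.exp (-(x:ℂ) * Complex.I)) / 2 := by
    intro x; rw [Complex.ofReal_cos]; rfl
  rw [hsinE, hsinE, hsinE, hsinE, hcosE, hcosE] at EC
  -- normalize the exponent arguments
  have B1 : Complex.exp (-(↑(Real.pi * (k:ℝ) / (n:ℝ))) * Complex.I)
      = ee n (-(k:ℤ)) := by rw [ee]; congr 1; push_cast; ring
  have B2 : Complex.exp ((↑(Real.pi * (k:ℝ) / (n:ℝ))) * Complex.I)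
      = ee n ((k:ℤ)) := by rw [ee]; congr 1; push_cast; ring
  have B3 : Complex.exp (-(↑(Real.pi * (k':ℝ) / (n:ℝ))) * Complex.I)
      = ee n (-(k':ℤ)) := by rw [ee]; congr 1; push_cast; ring
  have B4 : Complex.exp ((↑(Real.pi * (k':ℝ) / (n:ℝ))) * Complex.I)
      = ee n ((k':ℤ)) := by rw [ee]; congr 1; push_cast; ring
  have B5 : Complex.exp (-(↑(Real.pi * ((2*k:ℕ):ℝ) / (n:ℝ))) * Complex.I)
      = ee n (-(2*(k:ℤ))) := by rw [ee]; congr 1; push_cast; ring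
  have B6 : Complex.exp ((↑(Real.pi * ((2*k:ℕ):ℝ) / (n:ℝ))) * Complex.I)
      = ee n (2*(k:ℤ)) := by rw [ee]; congr 1; push_cast; ring
  have B7 : Complex.exp (-(↑(Real.pi * ((2*k':ℕ):ℝ) / (n:ℝ))) * Complex.I)
      = ee n (-(2*(k':ℤ))) := by rw [ee]; congr 1; push_cast; ring
  have B8 : Complex.exp ((↑(Real.pi * ((2*k':ℕ):ℝ) / (n:ℝ))) * Complex.I)
      = ee n (2*(k':ℤ)) := by rw [ee]; congr 1; push_cast; ring
  rw [B1, B2, B3, B4, B5, B6, B7, B8] at EC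
  have hQ1 : (-(1+Complex.I) * (ee n (k:ℤ) * ee n (2*(k':ℤ)) - ee n (-(k:ℤ)) * ee n (2*(k':ℤ)))
          + (1-Complex.I) * (ee n (k:ℤ) * ee n (-(2*(k':ℤ))) - ee n (-(k:ℤ)) * ee n (-(2*(k':ℤ))))) / 4
      = (σ:ℂ) * ((-(1+Complex.I) * (ee n (k':ℤ) * ee n (2*(k:ℤ)) - ee n (-(k':ℤ)) * ee n (2*(k:ℤ)))
          + (1-Complex.I) * (ee n (k':ℤ) * ee n (-(2*(k:ℤ))) - ee n (-(k':ℤ)) * ee n (-(2*(k:ℤ))))) / 4) := by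
    linear_combination EC + (-((ee n (-(k:ℤ)) - ee n (k:ℤ)) * (ee n (-(2*(k':ℤ))) - ee n (2*(k':ℤ)))) / 4
      + (σ:ℂ) * (ee n (-(k':ℤ)) - ee n (k':ℤ)) * (ee n (-(2*(k:ℤ))) - ee n (2*(k:ℤ))) / 4) * Complex.I_sq
  rw [e_mul n (k:ℤ) (2*(k':ℤ)), e_mul n (-(k:ℤ)) (2*(k':ℤ)),
      e_mul n (k:ℤ) (-(2*(k':ℤ))), e_mul n (-(k:ℤ)) (-(2*(k':ℤ))),
      e_mul n (k':ℤ) (2*(k:ℤ)), e_mul n (-(k':ℤ)) (2*(k:ℤ)),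
      e_mul n (k':ℤ) (-(2*(k:ℤ))), e_mul n (-(k':ℤ)) (-(2*(k:ℤ)))] at hQ1
  rw [eEq n c h2c ((k:ℤ) + 2*(k':ℤ)), eEq n c h2c (-(k:ℤ) + 2*(k':ℤ)),
      eEq n c h2c ((k:ℤ) + -(2*(k':ℤ))), eEq n c h2c (-(k:ℤ) + -(2*(k':ℤ))),
      eEq n c h2c ((k':ℤ) + 2*(k:ℤ)), eEq n c h2c (-(k':ℤ) + 2*(k:ℤ)),
      eEq n c h2c ((k':ℤ) + -(2*(k:ℤ))), eEq n c h2c (-(k':ℤ) + -(2*(k:ℤ)))] at hQ1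
  rw [sgn_even (k:ℤ) (k':ℤ), sgn_even' (k:ℤ) (k':ℤ), sgn_neg (k:ℤ) (k':ℤ), sgn_neg' (k:ℤ) (k':ℤ),
      sgn_even (k':ℤ) (k:ℤ), sgn_even' (k':ℤ) (k:ℤ), sgn_neg (k':ℤ) (k:ℤ), sgn_neg' (k':ℤ) (k:ℤ)] at hQ1
  -- normalize the ZMod casts
  have C1 : (((k:ℤ) + 2*(k':ℤ) : ℤ) : ZMod n) = ((k : ZMod n) + 2 * (k' : ZMod n)) := by push_cast; ring
  have C2 : ((-(k:ℤ) + 2*(k':ℤ) : ℤ) : ZMod n) = (-(k : ZMod n) + 2 * (k' : ZMod n)) := by push_cast; ring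
  have C3 : (((k:ℤ) + -(2*(k':ℤ)) : ℤ) : ZMod n) = ((k : ZMod n) + -(2 * (k' : ZMod n))) := by push_cast; ring
  have C4 : ((-(k:ℤ) + -(2*(k':ℤ)) : ℤ) : ZMod n) = (-(k : ZMod n) + -(2 * (k' : ZMod n))) := by push_cast; ring
  have C5 : (((k':ℤ) + 2*(k:ℤ) : ℤ) : ZMod n) = ((k' : ZMod n) + 2 * (k : ZMod n)) := by push_cast; ring
  have C6 : ((-(k':ℤ) + 2*(k:ℤ) : ℤ) : ZMod n) = (-(k' : ZMod n) + 2 * (k : ZMod n)) := by push_cast; ring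
  have C7 : (((k':ℤ) + -(2*(k:ℤ)) : ℤ) : ZMod n) = ((k' : ZMod n) + -(2 * (k : ZMod n))) := by push_cast; ring
  have C8 : ((-(k':ℤ) + -(2*(k:ℤ)) : ℤ) : ZMod n) = (-(k' : ZMod n) + -(2 * (k : ZMod n))) := by push_cast; ring
  rw [C1, C2, C3, C4, C5, C6, C7, C8] at hQ1
  set u : ZMod n := (c : ZMod n) with hu
  have h2u : 2 * u = 1 := by
    rw [hu, show ((2:ZMod n)) = ((2:ℕ) : ZMod n) by push_cast; ring, ← Nat.cast_mul, h2c]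
    push_cast
    simp [ZMod.natCast_self]
  set s : ℂ := (-1:ℂ) ^ (k:ℤ) with hs
  set s' : ℂ := (-1:ℂ) ^ (k':ℤ) with hs'
  have hss : s * s = 1 := sgn_self_mul (k:ℤ)
  have hss' : s' * s' = 1 := sgn_self_mul (k':ℤ)
  -- the sign ε
  set εQ : ℚ := (if σ = 1 then (1:ℚ) else -1) * (if Even (k + k') then 1 else -1) with hεQdef
  have hεQpm : εQ = 1 ∨ εQ = -1 := by
    by_cases h1 : σ = 1 <;> by_cases h2 : Even (k + k') <;> simp [hεQdef, h1, h2]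
  have hεC : (εQ : ℂ) = (σ:ℂ) * (s' * s) := by
    have hsp := sgn_parity k
    have hsp' := sgn_parity k'
    rcases hσ with rfl | rfl <;> by_cases h1 : Even k <;> by_cases h2 : Even k' <;>
      simp [hεQdef, hs, hs', hsp, hsp', h1, h2, Nat.even_add] <;> norm_num
  -- final equation, ready for rigidity
  set X1 : ZMod n := u * ((k : ZMod n) + 2 * (k' : ZMod n)) with hX1
  set X2 : ZMod n := u * (-(k : ZMod n) + 2 * (k' : ZMod n)) with hX2
  set X3 : ZMod n := u * ((k : ZMod n) + -(2 * (k' : ZMod n))) with hX3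
  set X4 : ZMod n := u * (-(k : ZMod n) + -(2 * (k' : ZMod n))) with hX4
  set Y1 : ZMod n := u * ((k' : ZMod n) + 2 * (k : ZMod n)) with hY1
  set Y2 : ZMod n := u * (-(k' : ZMod n) + 2 * (k : ZMod n)) with hY2
  set Y3 : ZMod n := u * ((k' : ZMod n) + -(2 * (k : ZMod n))) with hY3
  set Y4 : ZMod n := u * (-(k' : ZMod n) + -(2 * (k : ZMod n))) with hY4
  have hMain : -(1 + Complex.I) * (fpow n X1 - fpow n X2) + (1 - Complex.I) * (fpow n X3 - fpow n X4)
      = (εQ : ℂ) * (-(1 + Complex.I) * (fpow n Y1 - fpow n Y2)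
        + (1 - Complex.I) * (fpow n Y3 - fpow n Y4)) := by
    linear_combination (4*s) * hQ1
      - (-(1 + Complex.I) * (fpow n X1 - fpow n X2) + (1 - Complex.I) * (fpow n X3 - fpow n X4)) * hss
      - (-(1 + Complex.I) * (fpow n Y1 - fpow n Y2) + (1 - Complex.I) * (fpow n Y3 - fpow n Y4)) * hεC
  -- rigidity
  have hdelta := bridge n hp ⟨c0, hc0⟩ X1 X2 X3 X4 Y1 Y2 Y3 Y4 εQ hMain
  have two_ne : (2 : ZMod n) ≠ 0 := by
    intro h2
    rw [h2, zero_mul] at h2u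
    exact zero_ne_one h2u
  have hkZ : (k : ZMod n) ≠ 0 := by
    intro h0
    have := (ZMod.natCast_eq_zero_iff k n).mp h0
    have := Nat.le_of_dvd (by omega) this
    omega
  have hk'Z : (k' : ZMod n) ≠ 0 := by
    intro h0
    have := (ZMod.natCast_eq_zero_iff k' n).mp h0
    have := Nat.le_of_dvd (by omega) this
    omega
  have hX12 : X1 ≠ X2 := by
    intro heq
    rw [hX1, hX2] at heq
    apply hkZ
    linear_combination heq - (k : ZMod n) * h2u
  rcases deltas X1 X2 Y1 Y2 hX12 εQ hεQpm hdelta with ⟨hε1, hXY, _⟩ | ⟨hεm1, hA, hB⟩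
  · -- ε = 1 : k = k' and σ = 1
    rw [hX1, hY1] at hXY
    have hkk' : (k : ZMod n) = (k' : ZMod n) := by
      linear_combination (-2) * hXY + ((k' : ZMod n) - (k : ZMod n)) * h2u
    have hkeq : k = k' := by
      have := congrArg ZMod.val hkk'
      rwa [ZMod.val_cast_of_lt hkn, ZMod.val_cast_of_lt hk'n] at this
    refine ⟨hkeq, ?_⟩
    rcases hσ with hσ1 | hσm1
    · exact hσ1
    · exfalso
      rw [hεQdef, hσm1] at hε1
      have : Even (k + k') := by rw [hkeq]; exact ⟨k', rfl⟩
      simp [this] at hε1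
      norm_num at hε1
  · -- ε = -1 : contradiction
    exfalso
    rw [hX1, hY2] at hA
    rw [hX2, hY1] at hB
    have h8 : (8 : ZMod n) * (k' : ZMod n) = 0 := by
      linear_combination 6 * hA - 2 * hB - 8 * (k' : ZMod n) * h2u
    have h8ne : (8 : ZMod n) ≠ 0 := by
      rw [show ((8:ZMod n)) = 2^3 by norm_num]
      exact pow_ne_zero 3 two_ne
    rcases mul_eq_zero.mp h8 with h | h
    · exact h8ne h
    · exact hk'Z h
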